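/- For every tree T which is not isomorphic to K_2, the 2-multigraph ²T obtained from T by doubling every edge admits a decomposition into at most 2 locally irregular submultigraphs, i.e. lir(²T) ≤ 2. -/

import Mathlib

/-- The degree of a vertex `v` in the multigraph given by the symmetric
edge-multiplicity function `μ` : the sum of the multiplicities of the edges at `v`. -/
def mdeg {V : Type*} [Fintype V] (μ : V → V → ℕ) (v : V) : ℕ := ∑ u, μ v u

/-- A multigraph (given by a symmetric edge-multiplicity function `μ`) is locally
irregular if any two vertices adjacent in it (joined by an edge of positive
multiplicity) have distinct degrees. -/
def MulLocIrreg {V : Type*} [Fintype V] (μ : V → V → ℕ) : Prop :=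
  ∀ v w, 0 < μ v w → mdeg μ v ≠ mdeg μ w

/-- `μs` is a decomposition of the 2-multigraph `²G` (obtained from `G` by doubling
every edge) into `k` locally irregular submultigraphs: each `μs i` is a symmetric
multiplicity function supported on the edges of `G`, the multiplicities sum to `2`
on every edge of `G`, and each `μs i` is locally irregular. -/
def IsLirDecomp {V : Type*} [Fintype V] (G : SimpleGraph V) (k : ℕ)
    (μs : Fin k → V → V → ℕ) : Prop :=
  (∀ i v w, μs i v w = μs i w v) ∧
  (∀ i v w, 0 < μs i v w → G.Adj v w) ∧
  (∀ v w, G.Adj v w → ∑ i, μs i v w = 2) ∧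
  (∀ i, MulLocIrreg (μs i))

open SimpleGraph Finset

section Aux

set_option linter.unusedSectionVars false

variable {V : Type*} [Fintype V] [DecidableEq V] {T : SimpleGraph V}

lemma dist_ne_of_adj (ht : T.IsTree) {u v w : V} (h : T.Adj u v) :
    T.dist u w ≠ T.dist v w := by
  intro heq
  obtain ⟨p, hp, hl⟩ := ht.isConnected.exists_path_of_dist u w
  by_cases hv : v ∈ p.support
  · have hsplit := congrArg Walk.length (p.take_spec hv)
    rw [Walk.length_append] at hsplit
    have h1 : T.dist u v ≤ (p.takeUntil v hv).length := SimpleGraph.dist_le _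
    have h1' : T.dist u v = 1 := (SimpleGraph.dist_eq_one_iff_adj).mpr h
    have h2 : T.dist v w ≤ (p.dropUntil v hv).length := SimpleGraph.dist_le _
    omega
  · obtain ⟨r, hr, hrl⟩ := ht.isConnected.exists_path_of_dist v w
    have hq : (Walk.cons h.symm p).IsPath := (Walk.cons_isPath_iff _ _).2 ⟨hp, hv⟩
    have hu := (ht.existsUnique_path v w).unique hq hr
    have := congrArg Walk.length hu
    rw [Walk.length_cons, hl, hrl] at this
    omega

lemma adj_dist_cases (ht : T.IsTree) {u v : V} (h : T.Adj u v) (w : V) :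
    T.dist w u + 1 = T.dist w v ∨ T.dist w v + 1 = T.dist w u := by
  have h1 : T.dist w v ≤ T.dist w u + T.dist u v := ht.isConnected.dist_triangle
  have h2 : T.dist w u ≤ T.dist w v + T.dist v u := ht.isConnected.dist_triangle
  have h3 : T.dist u v = 1 := (SimpleGraph.dist_eq_one_iff_adj).mpr h
  have h4 : T.dist v u = 1 := (SimpleGraph.dist_eq_one_iff_adj).mpr h.symm
  have h5 : T.dist u w ≠ T.dist v w := dist_ne_of_adj ht h
  rw [SimpleGraph.dist_comm (u := u) (v := w), SimpleGraph.dist_comm (u := v) (v := w)] at h5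
  omega

lemma exists_closer (ht : T.IsTree) {v w : V} (hne : v ≠ w) :
    ∃ u, T.Adj v u ∧ T.dist u w + 1 = T.dist v w := by
  have hd : 0 < T.dist v w := ht.isConnected.pos_dist_of_ne hne
  obtain ⟨p, hp, hl⟩ := ht.isConnected.exists_path_of_dist v w
  cases p with
  | nil => simp at hl; rw [SimpleGraph.dist_self] at hd; omega
  | @cons _ u _ h q =>
    refine ⟨u, h, ?_⟩
    have h1 : T.dist u w ≤ q.length := SimpleGraph.dist_le _
    have h2 : T.dist v w ≤ T.dist v u + T.dist u w := ht.isConnected.dist_triangle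
    have h3 : T.dist v u = 1 := (SimpleGraph.dist_eq_one_iff_adj).mpr h
    rw [Walk.length_cons] at hl
    omega

lemma closer_unique (ht : T.IsTree) {v w u₁ u₂ : V} (h1 : T.Adj v u₁) (h2 : T.Adj v u₂)
    (hd1 : T.dist u₁ w + 1 = T.dist v w) (hd2 : T.dist u₂ w + 1 = T.dist v w) : u₁ = u₂ := by
  obtain ⟨p₁, hp₁, hl₁⟩ := ht.isConnected.exists_path_of_dist u₁ w
  obtain ⟨p₂, hp₂, hl₂⟩ := ht.isConnected.exists_path_of_dist u₂ w
  have hv₁ : v ∉ p₁.support := by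
    intro hv
    have hsplit := congrArg Walk.length (p₁.take_spec hv)
    rw [Walk.length_append] at hsplit
    have := SimpleGraph.dist_le (p₁.dropUntil v hv)
    omega
  have hv₂ : v ∉ p₂.support := by
    intro hv
    have hsplit := congrArg Walk.length (p₂.take_spec hv)
    rw [Walk.length_append] at hsplit
    have := SimpleGraph.dist_le (p₂.dropUntil v hv)
    omega
  have hq₁ : (Walk.cons h1 p₁).IsPath := (Walk.cons_isPath_iff _ _).2 ⟨hp₁, hv₁⟩
  have hq₂ : (Walk.cons h2 p₂).IsPath := (Walk.cons_isPath_iff _ _).2 ⟨hp₂, hv₂⟩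
  have hu := (ht.existsUnique_path v w).unique hq₁ hq₂
  have := congrArg (fun q : T.Walk v w => q.getVert 1) hu
  simpa [Walk.getVert_cons_succ, Walk.getVert_zero] using this

/-- sum of `τ` over the `u`-side of the edge `vu`. -/
noncomputable def sideSum (T : SimpleGraph V) (τ : V → ZMod 2) (v u : V) : ZMod 2 :=
  ∑ x, if T.dist x u + 1 = T.dist x v then τ x else 0

open Classical in
/-- first multiplicity function -/
noncomputable def mu1 (T : SimpleGraph V) (τ : V → ZMod 2) (v u : V) : ℕ :=
  if T.Adj v u then (if sideSum T τ v u = 1 then 2 else 1) else 0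

open Classical in
/-- second multiplicity function -/
noncomputable def mu2 (T : SimpleGraph V) (τ : V → ZMod 2) (v u : V) : ℕ :=
  if T.Adj v u then (if sideSum T τ v u = 1 then 0 else 1) else 0

open Classical in
noncomputable def Dg (T : SimpleGraph V) (v : V) : ZMod 2 :=
  ∑ u, if T.Adj v u then (1 : ZMod 2) else 0

lemma zmod2_cancel : ∀ a b : ZMod 2, a + b = 0 → a = b := by decide

lemma sideSum_symm (ht : T.IsTree) {τ : V → ZMod 2} (hτ : ∑ x, τ x = 0)
    {v u : V} (h : T.Adj v u) : sideSum T τ v u = sideSum T τ u v := by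
  apply zmod2_cancel
  have key : sideSum T τ v u + sideSum T τ u v = ∑ x, τ x := by
    rw [sideSum, sideSum, ← Finset.sum_add_distrib]
    apply Finset.sum_congr rfl
    intro x _
    rcases adj_dist_cases ht h x with hc | hc
    · rw [if_neg (by omega), if_pos hc, zero_add]
    · rw [if_pos hc, if_neg (by omega), add_zero]
  rw [key, hτ]

open Classical in
lemma sideSum_partition (ht : T.IsTree) {τ : V → ZMod 2} (hτ : ∑ x, τ x = 0) (v : V) :
    ∑ u, (if T.Adj v u then sideSum T τ v u else 0) = τ v := by
  have step1 : ∀ u, (if T.Adj v u then sideSum T τ v u else 0)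
      = ∑ x, if T.Adj v u ∧ T.dist x u + 1 = T.dist x v then τ x else 0 := by
    intro u
    by_cases h : T.Adj v u
    · rw [if_pos h, sideSum]
      apply Finset.sum_congr rfl; intro x _
      by_cases hx : T.dist x u + 1 = T.dist x v
      · rw [if_pos hx, if_pos ⟨h, hx⟩]
      · rw [if_neg hx, if_neg (by tauto)]
    · rw [if_neg h]
      symm; apply Finset.sum_eq_zero; intro x _
      rw [if_neg (by tauto)]
  rw [Finset.sum_congr rfl (fun u _ => step1 u), Finset.sum_comm]
  have step3 : ∀ x, (∑ u, if T.Adj v u ∧ T.dist x u + 1 = T.dist x v then τ x else 0)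
      = if x = v then 0 else τ x := by
    intro x
    by_cases hxv : x = v
    · subst hxv
      rw [if_pos rfl]
      apply Finset.sum_eq_zero; intro u _
      have : T.dist x x = 0 := SimpleGraph.dist_self
      rw [if_neg (by omega)]
    · rw [if_neg hxv]
      obtain ⟨u₀, hu₀, hd₀⟩ := exists_closer ht (Ne.symm hxv : v ≠ x)
      have hd₀' : T.dist x u₀ + 1 = T.dist x v := by
        rwa [SimpleGraph.dist_comm (u := x) (v := u₀), SimpleGraph.dist_comm (u := x) (v := v)]
      have hfilter : (univ.filter fun u => T.Adj v u ∧ T.dist x u + 1 = T.dist x v) = {u₀} := by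
        apply Finset.eq_singleton_iff_unique_mem.mpr
        constructor
        · simp only [Finset.mem_filter, Finset.mem_univ, true_and]
          exact ⟨hu₀, hd₀'⟩
        · intro y hy
          simp only [Finset.mem_filter, Finset.mem_univ, true_and] at hy
          refine closer_unique ht hy.1 hu₀ ?_ hd₀
          rw [SimpleGraph.dist_comm (u := y) (v := x), SimpleGraph.dist_comm (u := v) (v := x)]
          exact hy.2
      rw [← Finset.sum_filter, hfilter, Finset.sum_singleton]
  rw [Finset.sum_congr rfl (fun x _ => step3 x)]
  apply zmod2_cancel
  have : (∑ x, if x = v then 0 else τ x) + (∑ x, if x = v then τ x else 0) = ∑ x, τ x := by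
    rw [← Finset.sum_add_distrib]
    apply Finset.sum_congr rfl; intro x _
    by_cases hx : x = v <;> simp [hx]
  rw [Finset.sum_ite_eq' univ v τ, if_pos (Finset.mem_univ v)] at this
  rw [this, hτ]

lemma cast_mdeg_mu1 (ht : T.IsTree) {τ : V → ZMod 2} (hτ : ∑ x, τ x = 0) (v : V) :
    ((mdeg (mu1 T τ) v : ℕ) : ZMod 2) = Dg T v + τ v := by
  classical
  rw [mdeg, Nat.cast_sum]
  have step : ∀ u, ((mu1 T τ v u : ℕ) : ZMod 2)
      = (if T.Adj v u then (1 : ZMod 2) else 0) + (if T.Adj v u then sideSum T τ v u else 0) := by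
    intro u
    rw [mu1]
    by_cases h : T.Adj v u
    · rw [if_pos h, if_pos h, if_pos h]
      by_cases hs : sideSum T τ v u = 1
      · rw [if_pos hs, hs]; decide
      · have h0 : sideSum T τ v u = 0 := by
          rcases (by decide : ∀ a : ZMod 2, a = 0 ∨ a = 1) (sideSum T τ v u) with h' | h'
          · exact h'
          · exact absurd h' hs
        rw [if_neg hs, h0]; decide
    · rw [if_neg h, if_neg h, if_neg h]; decide
  rw [Finset.sum_congr rfl (fun u _ => step u), Finset.sum_add_distrib,
    sideSum_partition ht hτ v, Dg]

lemma cast_mdeg_mu2 (ht : T.IsTree) {τ : V → ZMod 2} (hτ : ∑ x, τ x = 0) (v : V) :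
    ((mdeg (mu2 T τ) v : ℕ) : ZMod 2) = Dg T v + τ v := by
  classical
  rw [mdeg, Nat.cast_sum]
  have step : ∀ u, ((mu2 T τ v u : ℕ) : ZMod 2)
      = (if T.Adj v u then (1 : ZMod 2) else 0) + (if T.Adj v u then sideSum T τ v u else 0) := by
    intro u
    rw [mu2]
    by_cases h : T.Adj v u
    · rw [if_pos h, if_pos h, if_pos h]
      by_cases hs : sideSum T τ v u = 1
      · rw [if_pos hs, hs]; decide
      · have h0 : sideSum T τ v u = 0 := by
          rcases (by decide : ∀ a : ZMod 2, a = 0 ∨ a = 1) (sideSum T τ v u) with h' | h'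
          · exact h'
          · exact absurd h' hs
        rw [if_neg hs, h0]; decide
    · rw [if_neg h, if_neg h, if_neg h]; decide
  rw [Finset.sum_congr rfl (fun u _ => step u), Finset.sum_add_distrib,
    sideSum_partition ht hτ v, Dg]

open Classical in
lemma sum_Dg (T : SimpleGraph V) : ∑ v, Dg T v = 0 := by
  classical
  have hdeg : ∀ v, Dg T v = ((T.degree v : ℕ) : ZMod 2) := by
    intro v
    rw [Dg, ← SimpleGraph.card_neighborFinset_eq_degree]
    rw [neighborFinset_eq_filter, Finset.natCast_card_filter]
  rw [Finset.sum_congr rfl (fun v _ => hdeg v), ← Nat.cast_sum,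
    SimpleGraph.sum_degrees_eq_twice_card_edges]
  rw [Nat.cast_mul]
  have : ((2:ℕ) : ZMod 2) = 0 := by decide
  rw [this, zero_mul]

lemma mu1_pos_adj {τ : V → ZMod 2} {v w : V} (h : 0 < mu1 T τ v w) : T.Adj v w := by
  by_contra hadj; rw [mu1, if_neg hadj] at h; omega

lemma mu2_pos_spec {τ : V → ZMod 2} {v w : V} (h : 0 < mu2 T τ v w) :
    T.Adj v w ∧ sideSum T τ v w ≠ 1 := by
  rw [mu2] at h
  split_ifs at h with h1 h2
  · omega
  · exact ⟨h1, h2⟩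
  · omega

lemma build (ht : T.IsTree) (τ : V → ZMod 2) (hτ : ∑ x, τ x = 0)
    (h1 : MulLocIrreg (mu1 T τ)) (h2 : MulLocIrreg (mu2 T τ)) :
    ∃ μs : Fin 2 → V → V → ℕ, IsLirDecomp T 2 μs := by
  refine ⟨![mu1 T τ, mu2 T τ], ?_, ?_, ?_, ?_⟩
  · intro i v w
    have hsymm1 : mu1 T τ v w = mu1 T τ w v := by
      by_cases hadj : T.Adj v w
      · rw [mu1, mu1, if_pos hadj, if_pos hadj.symm, sideSum_symm ht hτ hadj]
      · rw [mu1, mu1, if_neg hadj, if_neg fun h => hadj h.symm]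
    have hsymm2 : mu2 T τ v w = mu2 T τ w v := by
      by_cases hadj : T.Adj v w
      · rw [mu2, mu2, if_pos hadj, if_pos hadj.symm, sideSum_symm ht hτ hadj]
      · rw [mu2, mu2, if_neg hadj, if_neg fun h => hadj h.symm]
    fin_cases i
    · simpa using hsymm1
    · simpa using hsymm2
  · intro i v w
    fin_cases i
    · simpa using fun h => mu1_pos_adj h
    · simpa using fun h => (mu2_pos_spec h).1
  · intro v w hadj
    rw [Fin.sum_univ_two]
    simp only [Matrix.cons_val_zero, Matrix.cons_val_one, Matrix.head_cons]
    rw [mu1, mu2, if_pos hadj, if_pos hadj]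
    split_ifs <;> rfl
  · intro i
    fin_cases i
    · simpa using h1
    · simpa using h2

lemma caseA (ht : T.IsTree) (c : V → ZMod 2) (hproper : ∀ {a b : V}, T.Adj a b → c a ≠ c b)
    (hsum : ∑ v, (c v + Dg T v) = 0) :
    ∃ μs : Fin 2 → V → V → ℕ, IsLirDecomp T 2 μs := by
  set τ : V → ZMod 2 := fun v => c v + Dg T v with hτdef
  have hτ : ∑ x, τ x = 0 := hsum
  have hkey : ∀ a b : ZMod 2, b + (a + b) = a := by decide
  have hcast1 : ∀ v, ((mdeg (mu1 T τ) v : ℕ) : ZMod 2) = c v := by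
    intro v; rw [cast_mdeg_mu1 ht hτ v]; exact hkey _ _
  have hcast2 : ∀ v, ((mdeg (mu2 T τ) v : ℕ) : ZMod 2) = c v := by
    intro v; rw [cast_mdeg_mu2 ht hτ v]; exact hkey _ _
  apply build ht τ hτ
  · intro v w hpos heq
    have hadj := mu1_pos_adj hpos
    apply hproper hadj
    rw [← hcast1 v, ← hcast1 w, heq]
  · intro v w hpos heq
    have hadj := (mu2_pos_spec hpos).1
    apply hproper hadj
    rw [← hcast2 v, ← hcast2 w, heq]

end Aux

/-- For every tree `T` (connected acyclic graph) which is not isomorphic to `K₂`, the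
2-multigraph `²T` obtained by doubling every edge decomposes into at most 2 locally
irregular submultigraphs. -/
theorem lir_doubled_tree_le_two {V : Type*} [Fintype V] (T : SimpleGraph V)
    (htree : T.IsTree) (hK2 : ¬Nonempty (T ≃g (⊤ : SimpleGraph (Fin 2)))) :
    ∃ μs : Fin 2 → V → V → ℕ, IsLirDecomp T 2 μs := by
  classical
  obtain ⟨v₀⟩ := htree.isConnected.nonempty
  set c₀ : V → ZMod 2 := fun v => ((T.dist v₀ v : ℕ) : ZMod 2) with hc₀def
  have hne1 : ∀ a : ZMod 2, a ≠ a + 1 := by decide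
  have hcases2 : ∀ a : ZMod 2, a = 0 ∨ a = 1 := by decide
  have hproper₀ : ∀ {a b : V}, T.Adj a b → c₀ a ≠ c₀ b := by
    intro a b hab heq
    rcases adj_dist_cases htree hab v₀ with hc | hc
    · have : ((T.dist v₀ a : ℕ) : ZMod 2) = (((T.dist v₀ a + 1 : ℕ)) : ZMod 2) := by
        rw [hc]; exact heq
      push_cast at this
      exact hne1 _ this
    · have : ((T.dist v₀ b : ℕ) : ZMod 2) = (((T.dist v₀ b + 1 : ℕ)) : ZMod 2) := by
        rw [hc]; exact heq.symm
      push_cast at this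
      exact hne1 _ this
  by_cases hS0 : ∑ v, c₀ v = 0
  · exact caseA htree c₀ hproper₀
      (by rw [Finset.sum_add_distrib, hS0, sum_Dg, zero_add])
  · have hS1 : ∑ v, c₀ v = 1 := (hcases2 _).resolve_left hS0
    by_cases hodd : ((Fintype.card V : ℕ) : ZMod 2) = 1
    · -- n odd : flip the coloring
      apply caseA htree (fun v => c₀ v + 1)
      · intro a b hab heq
        exact hproper₀ hab (by exact add_right_cancel heq)
      · rw [Finset.sum_add_distrib, Finset.sum_add_distrib, sum_Dg, add_zero, hS1,
          Finset.sum_const, Finset.card_univ, nsmul_eq_mul, mul_one, hodd]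
        decide
    · -- case B
      have hn0 : ((Fintype.card V : ℕ) : ZMod 2) = 0 := (hcases2 _).resolve_right hodd
      have hneven : 2 ∣ Fintype.card V := by
        rwa [ZMod.natCast_eq_zero_iff] at hn0
      by_cases hn2 : Fintype.card V = 2
      · -- T is K₂, contradiction
        exfalso
        apply hK2
        have hadj_iff : ∀ a b : V, T.Adj a b ↔ a ≠ b := by
          intro a b
          constructor
          · exact fun h => h.ne
          · intro hne
            obtain ⟨u, hu, _⟩ := exists_closer htree hne
            have hub : u = b := by
              by_contra hub
              have hcard3 : ({a, b, u} : Finset V).card = 3 := by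
                rw [Finset.card_insert_of_notMem (by simp [hne, hu.ne]),
                  Finset.card_insert_of_notMem (by simp [Ne.symm hub]),
                  Finset.card_singleton]
              have := Finset.card_le_univ ({a, b, u} : Finset V)
              rw [hcard3] at this
              omega
            exact hub ▸ hu
        set e := Fintype.equivFinOfCardEq hn2 with hedef
        exact ⟨⟨e, by
          intro a b
          rw [top_adj, hadj_iff, e.injective.ne_iff]⟩⟩
      · have hn3 : 3 ≤ Fintype.card V := by
          have hpos : 0 < Fintype.card V := Fintype.card_pos_iff.mpr ⟨v₀⟩
          omega
        -- find a leaf ℓ at maximal distance from v₀, with its unique neighbour b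
        obtain ⟨ℓ, -, hmax⟩ := Finset.exists_max_image univ (fun y => T.dist v₀ y)
          ⟨v₀, Finset.mem_univ v₀⟩
        have hmax' : ∀ y, T.dist v₀ y ≤ T.dist v₀ ℓ := fun y => hmax y (Finset.mem_univ y)
        obtain ⟨x₁, hx₁⟩ := Fintype.exists_ne_of_one_lt_card (by omega) v₀
        have hdistpos : 0 < T.dist v₀ ℓ :=
          lt_of_lt_of_le (htree.isConnected.pos_dist_of_ne (Ne.symm hx₁)) (hmax' x₁)
        have hℓv₀ : ℓ ≠ v₀ := by
          intro h
          rw [h, SimpleGraph.dist_self] at hdistpos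
          omega
        obtain ⟨b, hb, hdb⟩ := exists_closer htree hℓv₀
        have huniq : ∀ y, T.Adj ℓ y → y = b := by
          intro y hy
          rcases adj_dist_cases htree hy v₀ with hc | hc
          · have := hmax' y
            omega
          · refine closer_unique htree hy hb ?_ hdb
            rwa [SimpleGraph.dist_comm (u := y) (v := v₀),
              SimpleGraph.dist_comm (u := ℓ) (v := v₀)]
        have hfilterℓ : (univ.filter fun u => T.Adj ℓ u) = {b} := by
          apply Finset.eq_singleton_iff_unique_mem.mpr
          refine ⟨by simpa using hb, ?_⟩
          intro y hy
          simp only [Finset.mem_filter, Finset.mem_univ, true_and] at hy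
          exact huniq y hy
        have hDℓ : Dg T ℓ = 1 := by
          rw [Dg, ← Finset.sum_filter, hfilterℓ, Finset.sum_singleton]
        set ε : ZMod 2 := 1 + c₀ ℓ with hεdef
        set c : V → ZMod 2 := fun v => c₀ v + ε with hcdef
        have hcℓ : c ℓ = 1 := by
          rw [hcdef]
          show c₀ ℓ + ε = 1
          rw [hεdef]
          exact (by decide : ∀ a : ZMod 2, a + (1 + a) = 1) _
        have hcproper : ∀ {a b : V}, T.Adj a b → c a ≠ c b := by
          intro a b hab heq
          exact hproper₀ hab (add_right_cancel heq)
        set τ : V → ZMod 2 := fun v => if v = ℓ then 1 else c v + Dg T v with hτdef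
        have hτℓ : τ ℓ = 1 := by rw [hτdef]; simp
        have hτne : ∀ v, v ≠ ℓ → τ v = c v + Dg T v := by
          intro v hv; rw [hτdef]; exact if_neg hv
        have hτ : ∑ x, τ x = 0 := by
          rw [← Finset.add_sum_erase univ τ (Finset.mem_univ ℓ), hτℓ]
          have h2 : ∀ x ∈ univ.erase ℓ, τ x = c x + Dg T x := fun x hx =>
            hτne x (Finset.ne_of_mem_erase hx)
          rw [Finset.sum_congr rfl h2]
          have h3 : (c ℓ + Dg T ℓ) + ∑ x ∈ univ.erase ℓ, (c x + Dg T x)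
              = ∑ x, (c x + Dg T x) :=
            Finset.add_sum_erase _ (fun x => c x + Dg T x) (Finset.mem_univ ℓ)
          have h4 : ∑ x, (c x + Dg T x) = 1 := by
            rw [Finset.sum_add_distrib, sum_Dg, add_zero]
            show ∑ x, (c₀ x + ε) = 1
            rw [Finset.sum_add_distrib, hS1, Finset.sum_const, Finset.card_univ,
              nsmul_eq_mul, hn0, zero_mul, add_zero]
          rw [hcℓ, hDℓ, h4] at h3
          have : ∑ x ∈ univ.erase ℓ, (c x + Dg T x) = 1 := by
            have := h3
            revert this
            generalize (∑ x ∈ univ.erase ℓ, (c x + Dg T x)) = A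
            revert A; decide
          rw [this]
          decide
        have hsideℓ : sideSum T τ ℓ b = 1 := by
          have hpart := sideSum_partition htree hτ ℓ
          rw [← Finset.sum_filter, hfilterℓ, Finset.sum_singleton, hτℓ] at hpart
          exact hpart
        have hsidebℓ : sideSum T τ b ℓ = 1 := by
          rw [← sideSum_symm htree hτ hb]
          exact hsideℓ
        -- second neighbour y of b
        obtain ⟨x, hxℓ, hxb⟩ : ∃ x : V, x ≠ ℓ ∧ x ≠ b := by
          have hcard : 0 < (univ \ {ℓ, b} : Finset V).card := by
            have hsub : ({ℓ, b} : Finset V) ⊆ univ := Finset.subset_univ _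
            rw [Finset.card_sdiff_of_subset hsub]
            have : ({ℓ, b} : Finset V).card ≤ 2 := Finset.card_insert_le _ _ |>.trans (by simp)
            have := Finset.card_univ (α := V)
            omega
          obtain ⟨x, hx⟩ := Finset.card_pos.mp hcard
          simp only [Finset.mem_sdiff, Finset.mem_univ, true_and, Finset.mem_insert,
            Finset.mem_singleton, not_or] at hx
          exact ⟨x, hx.1, hx.2⟩
        obtain ⟨y, hyb, hdy⟩ := exists_closer htree (show b ≠ x from fun h => hxb h.symm)
        have hyℓ : y ≠ ℓ := by
          intro h
          subst h
          obtain ⟨z, hz, hdz⟩ := exists_closer htree (show y ≠ x from fun h => hxℓ h.symm)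
          have hzb : z = b := huniq z hz
          subst hzb
          omega
        -- the two special degree values
        have hmdegℓ : mdeg (mu1 T τ) ℓ = 2 := by
          rw [mdeg]
          have : ∀ u, mu1 T τ ℓ u = if T.Adj ℓ u then (if sideSum T τ ℓ u = 1 then 2 else 1) else 0 :=
            fun u => rfl
          rw [Finset.sum_congr rfl fun u _ => this u, ← Finset.sum_filter, hfilterℓ,
            Finset.sum_singleton, if_pos hsideℓ]
        have hmdegb : 3 ≤ mdeg (mu1 T τ) b := by
          rw [mdeg]
          have hsum := Finset.sum_le_sum_of_subset (f := mu1 T τ b)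
            (Finset.subset_univ ({ℓ, y} : Finset V))
          have hpair : ∑ u ∈ ({ℓ, y} : Finset V), mu1 T τ b u = mu1 T τ b ℓ + mu1 T τ b y :=
            Finset.sum_pair (Ne.symm hyℓ)
          have h1 : mu1 T τ b ℓ = 2 := by
            rw [mu1, if_pos hb.symm, if_pos hsidebℓ]
          have h2 : 1 ≤ mu1 T τ b y := by
            rw [mu1, if_pos hyb]
            split_ifs <;> omega
          rw [hpair] at hsum
          omega
        -- assemble
        apply build htree τ hτ
        · intro v w hpos heq
          have hadj := mu1_pos_adj hpos
          by_cases hvℓ : v = ℓ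
          · subst hvℓ
            have hwb : w = b := huniq w hadj
            subst hwb
            rw [hmdegℓ] at heq
            omega
          · by_cases hwℓ : w = ℓ
            · subst hwℓ
              have hvb : v = b := huniq v hadj.symm
              subst hvb
              rw [hmdegℓ] at heq
              omega
            · have hcv : ((mdeg (mu1 T τ) v : ℕ) : ZMod 2) = c v := by
                rw [cast_mdeg_mu1 htree hτ v, hτne v hvℓ]
                exact (by decide : ∀ a b : ZMod 2, b + (a + b) = a) _ _
              have hcw : ((mdeg (mu1 T τ) w : ℕ) : ZMod 2) = c w := by
                rw [cast_mdeg_mu1 htree hτ w, hτne w hwℓ]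
                exact (by decide : ∀ a b : ZMod 2, b + (a + b) = a) _ _
              apply hcproper hadj
              rw [← hcv, ← hcw, heq]
        · intro v w hpos heq
          obtain ⟨hadj, hside⟩ := mu2_pos_spec hpos
          by_cases hvℓ : v = ℓ
          · subst hvℓ
            have hwb : w = b := huniq w hadj
            subst hwb
            exact hside hsideℓ
          · by_cases hwℓ : w = ℓ
            · subst hwℓ
              have hvb : v = b := huniq v hadj.symm
              subst hvb
              exact hside hsidebℓ
            · have hcv : ((mdeg (mu2 T τ) v : ℕ) : ZMod 2) = c v := by
                rw [cast_mdeg_mu2 htree hτ v, hτne v hvℓ]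
                exact (by decide : ∀ a b : ZMod 2, b + (a + b) = a) _ _
              have hcw : ((mdeg (mu2 T τ) w : ℕ) : ZMod 2) = c w := by
                rw [cast_mdeg_mu2 htree hτ w, hτne w hwℓ]
                exact (by decide : ∀ a b : ZMod 2, b + (a + b) = a) _ _
              apply hcproper hadj
              rw [← hcv, ← hcw, heq]
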